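/- Let X be a nonnegative real-valued random variable on a probability space with expectation μ = E[X], and suppose K ≥ 1 is a real number such that X ≤ K·μ almost surely. Then there exists i ∈ {0, 1, …, ⌈log₂ K⌉} such that P(X ≥ 2^i · μ / (1 + ⌈log₂ K⌉)) ≥ 2^{−(i+1)}. -/

import Mathlib

open MeasureTheory

theorem stmt7 {Ω : Type*} [MeasurableSpace Ω] (P : Measure Ω) [IsProbabilityMeasure P]
    (X : Ω → ℝ) (hX : Integrable X P) (hX0 : ∀ ω, 0 ≤ X ω)
    (K : ℝ) (hK : 1 ≤ K)
    (hbound : ∀ᵐ ω ∂P, X ω ≤ K * ∫ x, X x ∂P) :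
    ∃ i : ℕ, i ≤ ⌈Real.logb 2 K⌉₊ ∧
      ENNReal.ofReal ((2 : ℝ) ^ (i + 1))⁻¹ ≤
        P {ω | (2 : ℝ) ^ i * (∫ x, X x ∂P) / (1 + (⌈Real.logb 2 K⌉₊ : ℝ)) ≤ X ω} := by
  classical
  set μ := ∫ x, X x ∂P with hμdef
  set L := ⌈Real.logb 2 K⌉₊ with hLdef
  have hK0 : (0:ℝ) < K := lt_of_lt_of_le one_pos hK
  have hμ0 : 0 ≤ μ := integral_nonneg hX0
  rcases eq_or_lt_of_le hμ0 with hμz | hμpos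
  · -- μ = 0 case : take i = 0
    refine ⟨0, Nat.zero_le _, ?_⟩
    have hset : {ω | (2:ℝ)^(0:ℕ) * μ / (1 + (L:ℝ)) ≤ X ω} = Set.univ := by
      ext ω
      simp [← hμz, hX0 ω]
    rw [hset, measure_univ]
    exact ENNReal.ofReal_le_one.mpr (by norm_num)
  rcases Nat.eq_zero_or_pos L with hL0 | hLpos
  · -- L = 0, hence K = 1 and X = μ a.e.
    have hlogb : Real.logb 2 K ≤ 0 := by
      have := hL0 ▸ hLdef
      exact Nat.ceil_eq_zero.mp this.symm
    have hK1 : K = 1 := by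
      have h1 : K = (2:ℝ) ^ Real.logb 2 K := (Real.rpow_logb two_pos (by norm_num) hK0).symm
      have h2 : (2:ℝ) ^ Real.logb 2 K ≤ 1 :=
        Real.rpow_le_one_of_one_le_of_nonpos one_le_two hlogb
      linarith [h1 ▸ h2]
    have hbound' : ∀ᵐ ω ∂P, X ω ≤ μ := by
      filter_upwards [hbound] with ω hb
      rw [hK1] at hb; linarith
    have hint : Integrable (fun ω => μ - X ω) P := (integrable_const μ).sub hX
    have hnn : 0 ≤ᵐ[P] fun ω => μ - X ω := by
      filter_upwards [hbound'] with ω hb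
      simp [sub_nonneg, hb]
    have hzero : ∫ ω, (μ - X ω) ∂P = 0 := by
      rw [integral_sub (integrable_const μ) hX]
      simp [hμdef]
    have haeq : (fun ω => μ - X ω) =ᵐ[P] 0 :=
      (integral_eq_zero_iff_of_nonneg_ae hnn hint).mp hzero
    have hae : ∀ᵐ ω ∂P, μ ≤ X ω := by
      filter_upwards [haeq] with ω hω
      have : μ - X ω = 0 := hω
      linarith
    refine ⟨0, Nat.zero_le _, ?_⟩
    have hone : P {ω | (2:ℝ)^(0:ℕ) * μ / (1 + (L:ℝ)) ≤ X ω} = 1 := by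
      refine le_antisymm prob_le_one ?_
      have h0 : P {ω | (2:ℝ)^(0:ℕ) * μ / (1 + (L:ℝ)) ≤ X ω}ᶜ = 0 := by
        rw [← nonpos_iff_eq_zero]
        refine le_trans (measure_mono ?_) (le_of_eq (ae_iff.mp hae))
        intro ω hω
        simp only [Set.mem_compl_iff, Set.mem_setOf_eq, hL0] at hω ⊢
        intro h; exact hω (by simpa [hL0] using h)
      have := measure_union_le (μ := P) {ω | (2:ℝ)^(0:ℕ) * μ / (1 + (L:ℝ)) ≤ X ω}
        {ω | (2:ℝ)^(0:ℕ) * μ / (1 + (L:ℝ)) ≤ X ω}ᶜ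
      rw [Set.union_compl_self, measure_univ, h0, add_zero] at this
      exact this
    rw [hone]
    exact ENNReal.ofReal_le_one.mpr (by norm_num)
  -- main case : μ > 0, L ≥ 1
  set n : ℝ := 1 + (L:ℝ) with hndef
  have hn0 : (0:ℝ) < n := by positivity
  have hn2 : (2:ℝ) ≤ n := by
    rw [hndef]
    have : (1:ℝ) ≤ (L:ℝ) := by exact_mod_cast hLpos
    linarith
  set t : ℕ → ℝ := fun i => 2^i * μ / n with htdef
  have ht_mono : Monotone t := by
    intro i j hij
    dsimp [t]
    gcongr
    · exact one_le_two
  have hKle : K ≤ 2^L := by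
    have h1 : Real.logb 2 K ≤ (L:ℝ) := Nat.le_ceil _
    calc K = (2:ℝ) ^ Real.logb 2 K := (Real.rpow_logb two_pos (by norm_num) hK0).symm
    _ ≤ (2:ℝ) ^ ((L:ℝ)) := Real.rpow_le_rpow_of_exponent_le one_le_two h1
    _ = 2^L := by rw [Real.rpow_natCast]
  have hKge : 2^L / n ≤ K := by
    have h2 : ((L-1:ℕ):ℝ) < Real.logb 2 K := Nat.lt_ceil.mp (by omega)
    have h3 : (2:ℝ)^(L-1:ℕ) ≤ K := by
      calc (2:ℝ)^(L-1:ℕ) = (2:ℝ)^((L-1:ℕ):ℝ) := (Real.rpow_natCast _ _).symm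
      _ ≤ (2:ℝ)^(Real.logb 2 K) := Real.rpow_le_rpow_of_exponent_le one_le_two h2.le
      _ = K := Real.rpow_logb two_pos (by norm_num) hK0
    have hL2 : (2:ℝ)^L = 2 * 2^(L-1:ℕ) := by
      rw [← pow_succ']; congr 1; omega
    rw [div_le_iff₀ hn0]
    nlinarith [pow_pos (two_pos (α := ℝ)) (L-1)]
  -- measurable representative
  obtain ⟨X', hX'meas, hXX'⟩ : ∃ X', StronglyMeasurable X' ∧ X =ᵐ[P] X' :=
    ⟨hX.1.mk X, hX.1.stronglyMeasurable_mk, hX.1.ae_eq_mk⟩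
  set A : ℕ → Set Ω := fun i => {ω | t i ≤ X' ω} with hAdef
  have hAmeas : ∀ i, MeasurableSet (A i) :=
    fun i => measurableSet_le measurable_const hX'meas.measurable
  have hAeq : ∀ i, P (A i) = P {ω | t i ≤ X ω} := by
    intro i
    apply measure_congr
    filter_upwards [hXX'] with ω hω
    change (t i ≤ X' ω) = (t i ≤ X ω)
    rw [hω]
  by_contra hcon
  push_neg at hcon
  have hp : ∀ i, i ≤ L → (P (A i)).toReal < ((2:ℝ)^(i+1))⁻¹ := by
    intro i hi
    have h := hcon i hi
    rw [← hAeq i] at h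
    exact ENNReal.toReal_lt_of_lt_ofReal h
  have hp0 : ∀ i, 0 ≤ (P (A i)).toReal := fun i => ENNReal.toReal_nonneg
  set c : ℕ → ℝ := fun i => t (i+1) - t i with hcdef
  have hc : ∀ i, c i = 2^i * μ / n := by
    intro i
    dsimp [c, t]
    rw [pow_succ]
    field_simp
    ring
  have hcpos : ∀ i, 0 < c i := by
    intro i; rw [hc i]; positivity
  set g : Ω → ℝ := fun ω => t 0 + (∑ i ∈ Finset.range L,
      c i * (A i).indicator (fun _ => (1:ℝ)) ω) +
      (K*μ - t L) * (A L).indicator (fun _ => (1:ℝ)) ω with hgdef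
  have htL : t L ≤ K * μ := by
    calc t L = (2^L / n) * μ := by dsimp [t]; ring
    _ ≤ K * μ := mul_le_mul_of_nonneg_right hKge hμ0
  have hg_ae : ∀ᵐ ω ∂P, X ω ≤ g ω := by
    filter_upwards [hbound, hXX'] with ω hb he
    dsimp [g]
    by_cases hL' : t L ≤ X' ω
    · have hall : ∀ i, ω ∈ A i → True := fun _ _ => trivial
      have hsum : (∑ i ∈ Finset.range L, c i * (A i).indicator (fun _ => (1:ℝ)) ω)
          = t L - t 0 := by
        rw [Finset.sum_congr rfl (fun i hi => ?_)]
        · exact Finset.sum_range_sub t L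
        · have hmem : ω ∈ A i := by
            simp only [A, Set.mem_setOf_eq]
            exact le_trans (ht_mono (le_of_lt (Finset.mem_range.mp hi))) hL'
          rw [Set.indicator_of_mem hmem]
          dsimp [c]; ring
      have hmemL : ω ∈ A L := hL'
      rw [hsum, Set.indicator_of_mem hmemL]
      have : K * μ ≥ X ω := hb
      linarith
    · have hex : ∃ i, X' ω < t i := ⟨L, lt_of_not_ge hL'⟩
      set j := Nat.find hex with hjdef
      have hj : X' ω < t j := Nat.find_spec hex
      have hmin : ∀ i, i < j → t i ≤ X' ω := fun i hi => not_lt.mp (Nat.find_min hex hi)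
      have hj_le : j ≤ L := Nat.find_le (lt_of_not_ge hL')
      have hnotmem : ∀ i, j ≤ i → ω ∉ A i := by
        intro i hi hmem
        exact absurd (le_trans (ht_mono hi) hmem) (not_le.mpr hj)
      have hsum : (∑ i ∈ Finset.range L, c i * (A i).indicator (fun _ => (1:ℝ)) ω)
          = t j - t 0 := by
        rw [← Finset.sum_subset (Finset.range_subset_range.mpr hj_le)
          (fun i _ hni => ?_)]
        · rw [Finset.sum_congr rfl (fun i hi => ?_)]
          · exact Finset.sum_range_sub t j
          · have hmem : ω ∈ A i := hmin i (Finset.mem_range.mp hi)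
            rw [Set.indicator_of_mem hmem]
            dsimp [c]; ring
        · rw [Set.indicator_of_notMem (hnotmem i (le_of_not_gt
            (fun hlt => hni (Finset.mem_range.mpr hlt))))]
          ring
      have hnotL : ω ∉ A L := hnotmem L hj_le
      rw [hsum, Set.indicator_of_notMem hnotL]
      have : X ω < t j := he ▸ hj
      linarith
  have hind_int : ∀ i, Integrable ((A i).indicator (fun _ => (1:ℝ))) P :=
    fun i => (integrable_const (1:ℝ)).indicator (hAmeas i)
  have hS_int : Integrable (fun ω => ∑ i ∈ Finset.range L,
      c i * (A i).indicator (fun _ => (1:ℝ)) ω) P :=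
    integrable_finset_sum _ (fun i _ => (hind_int i).const_mul _)
  have hT_int : Integrable (fun ω => (K*μ - t L) * (A L).indicator (fun _ => (1:ℝ)) ω) P :=
    (hind_int L).const_mul _
  have hg_int : Integrable g P := by
    apply Integrable.add
    · exact (integrable_const _).add hS_int
    · exact hT_int
  have hint_ind : ∀ i, ∫ ω, (A i).indicator (fun _ => (1:ℝ)) ω ∂P = (P (A i)).toReal := by
    intro i
    rw [integral_indicator_const (1:ℝ) (hAmeas i)]
    simp
    rfl
  have hgint_eq : ∫ ω, g ω ∂P = t 0 + (∑ i ∈ Finset.range L, c i * (P (A i)).toReal) +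
      (K*μ - t L) * (P (A L)).toReal := by
    have h1 : Integrable (fun ω => t 0 + (∑ i ∈ Finset.range L,
        c i * (A i).indicator (fun _ => (1:ℝ)) ω)) P := (integrable_const _).add hS_int
    rw [hgdef]
    rw [integral_add h1 hT_int,
        integral_add (integrable_const _) hS_int,
        integral_finset_sum _ (fun i _ => (hind_int i).const_mul _)]
    simp only [integral_const, measure_univ, ENNReal.toReal_one, probReal_univ, one_smul,
      integral_const_mul, hint_ind]
  have hμle : μ ≤ t 0 + (∑ i ∈ Finset.range L, c i * (P (A i)).toReal) +
      (K*μ - t L) * (P (A L)).toReal := by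
    rw [← hgint_eq, hμdef]
    exact integral_mono_ae hX hg_int hg_ae
  have hsum_lt : ∑ i ∈ Finset.range L, c i * (P (A i)).toReal < (L:ℝ) * (μ / (2*n)) := by
    have hterm : ∀ i ∈ Finset.range L, c i * (P (A i)).toReal < μ/(2*n) := by
      intro i hi
      have hi' : i ≤ L := le_of_lt (Finset.mem_range.mp hi)
      have h1 : (P (A i)).toReal < ((2:ℝ)^(i+1))⁻¹ := hp i hi'
      calc c i * (P (A i)).toReal < c i * ((2:ℝ)^(i+1))⁻¹ :=
            mul_lt_mul_of_pos_left h1 (hcpos i)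
      _ = μ/(2*n) := by
            rw [hc i, pow_succ]
            have h2i : ((2:ℝ)^i) ≠ 0 := by positivity
            field_simp
    calc ∑ i ∈ Finset.range L, c i * (P (A i)).toReal
        < ∑ _i ∈ Finset.range L, μ/(2*n) :=
          Finset.sum_lt_sum_of_nonempty (Finset.nonempty_range_iff.mpr (by omega)) hterm
    _ = (L:ℝ) * (μ / (2*n)) := by
          rw [Finset.sum_const, Finset.card_range, nsmul_eq_mul]
  have hlast : (K*μ - t L) * (P (A L)).toReal ≤ (2^L*μ - t L) * ((2:ℝ)^(L+1))⁻¹ := by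
    apply mul_le_mul
    · have : K * μ ≤ 2^L * μ := mul_le_mul_of_nonneg_right hKle hμ0
      linarith
    · exact (hp L le_rfl).le
    · exact hp0 L
    · have h1 : t L ≤ 2^L * μ := by
        dsimp [t]
        rw [div_le_iff₀ hn0]
        nlinarith [mul_nonneg (pow_nonneg (by norm_num : (0:ℝ) ≤ 2) L) hμ0, hn2]
      linarith
  have hfinal : μ < t 0 + (L:ℝ)*(μ/(2*n)) + (2^L*μ - t L)*((2:ℝ)^(L+1))⁻¹ := by
    linarith
  have hrhs : t 0 + (L:ℝ)*(μ/(2*n)) + (2^L*μ - t L)*((2:ℝ)^(L+1))⁻¹ = μ := by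
    have hLn : (L:ℝ) = n - 1 := by rw [hndef]; ring
    dsimp [t]
    rw [hLn, pow_zero]
    have h2L : ((2:ℝ)^L) ≠ 0 := by positivity
    have h2L1 : ((2:ℝ)^(L+1)) ≠ 0 := by positivity
    field_simp
    ring
  rw [hrhs] at hfinal
  exact absurd hfinal (lt_irrefl μ)
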